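/- Let A = (A, B, β, T) be a finite relative Rota-Baxter group with |A| = m and |B| = n, and let (τ₁, τ₂, ρ, χ) be a relative Rota-Baxter 2-cocycle with values in C = (ℂ^×, ℂ^×, trivial action, identity). Then for all a ∈ A and b ∈ B, ρ(a, b)^{mn} = θ₁(a) · θ₁(β_b(a))⁻¹, where θ₁(x) = (∏_{a'∈A} τ₁(x, a'))^n. -/
import Mathlib


/-- Let `𝒜 = (A, B, β, T)` be a finite relative Rota-Baxter group with
`|A| = m`, `|B| = n`, and let `(τ₁, τ₂, ρ, χ)` be a relative Rota-Baxter 2-cocycle with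
values in `𝒞 = (ℂˣ, ℂˣ, trivial, id)`. Then for all `a ∈ A`, `b ∈ B`,
`ρ(a,b)^{mn} = θ₁(a) θ₁(β_b a)⁻¹`, where `θ₁(x) = (∏_{a'} τ₁(x, a'))^n`. -/
theorem rho_pow_mn {A B : Type*} [Group A] [Group B] [Fintype A] [Fintype B]
    (β : B →* MulAut A) (T : A → B)
    (hT : ∀ a₁ a₂ : A, T a₁ * T a₂ = T (a₁ * β (T a₁) a₂))
    (τ₁ : A → A → ℂˣ) (τ₂ : B → B → ℂˣ) (ρ : A → B → ℂˣ) (χ : A → ℂˣ)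
    (hτ₁norm : ∀ a : A, τ₁ a 1 = 1 ∧ τ₁ 1 a = 1)
    (hτ₁ : ∀ a₁ a₂ a₃ : A,
      τ₁ a₂ a₃ * (τ₁ (a₁ * a₂) a₃)⁻¹ * τ₁ a₁ (a₂ * a₃) * (τ₁ a₁ a₂)⁻¹ = 1)
    (hτ₂norm : ∀ b : B, τ₂ b 1 = 1 ∧ τ₂ 1 b = 1)
    (hτ₂ : ∀ b₁ b₂ b₃ : B,
      τ₂ b₂ b₃ * (τ₂ (b₁ * b₂) b₃)⁻¹ * τ₂ b₁ (b₂ * b₃) * (τ₂ b₁ b₂)⁻¹ = 1)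
    (hρnorm : (∀ a : A, ρ a 1 = 1) ∧ (∀ b : B, ρ 1 b = 1)) (hχnorm : χ 1 = 1)
    (hcond1 : ∀ (a : A) (b₁ b₂ : B), ρ a (b₁ * b₂) = ρ (β b₂ a) b₁ * ρ a b₂)
    (hcond2 : ∀ (a₁ a₂ : A) (b : B),
      ρ (a₁ * a₂) b * (ρ a₁ b)⁻¹ * (ρ a₂ b)⁻¹ * τ₁ a₁ a₂ * (τ₁ (β b a₁) (β b a₂))⁻¹ = 1)
    (hcond3 : ∀ a₁ a₂ : A,
      ρ a₂ (T a₁) * τ₁ a₁ (β (T a₁) a₂) =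
        τ₂ (T a₁) (T a₂) * (χ a₂ * (χ (a₁ * β (T a₁) a₂))⁻¹ * χ a₁)) :
    ∀ (a : A) (b : B),
      ρ a b ^ (Fintype.card A * Fintype.card B) =
        (∏ a' : A, τ₁ a a') ^ Fintype.card B *
          ((∏ a' : A, τ₁ (β b a) a') ^ Fintype.card B)⁻¹ := by
  intro a b
  have H : ∏ a₂ : A,
      (ρ (a * a₂) b * (ρ a b)⁻¹ * (ρ a₂ b)⁻¹ * τ₁ a a₂ * (τ₁ (β b a) (β b a₂))⁻¹) = 1 :=
    Finset.prod_eq_one (fun a₂ _ => hcond2 a a₂ b)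
  simp only [Finset.prod_mul_distrib, Finset.prod_inv_distrib, Finset.prod_const,
    Finset.card_univ] at H
  have e1 : ∏ a₂ : A, ρ (a * a₂) b = ∏ a₂ : A, ρ a₂ b :=
    Fintype.prod_equiv (Equiv.mulLeft a) _ _ (fun x => rfl)
  have e2 : ∏ a₂ : A, τ₁ (β b a) (β b a₂) = ∏ a' : A, τ₁ (β b a) a' :=
    Fintype.prod_equiv (β b).toEquiv _ _ (fun x => rfl)
  rw [e1, e2, mul_right_comm (∏ a₂ : A, ρ a₂ b) ((ρ a b) ^ Fintype.card A)⁻¹,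
    mul_inv_cancel, one_mul, mul_assoc] at H
  have key : ρ a b ^ Fintype.card A =
      (∏ a' : A, τ₁ a a') * (∏ a' : A, τ₁ (β b a) a')⁻¹ := inv_mul_eq_one.mp H
  rw [pow_mul, key, ← inv_pow, ← mul_pow]
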